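/- Let κ, a, k, c, m, ε, p ∈ ℝ with c ≠ 0 and p ∉ {−1, 0, 1}. Suppose u : ℝ → ℝ → ℝ is C² on ℝ × (0,∞), u_r(t,r) > 0 and a + u(t,r) > 0 for all t ∈ ℝ and r > 0, and u satisfies u_t(t,r) = −κ·(p·u_r(t,r)^(p−1)·u_rr(t,r) + (m/r)·u_r(t,r)^p) + k·(a + u(t,r))^p + c·(a + u(t,r)) for all t ∈ ℝ and r > 0, where all powers are real powers (Real.rpow). For s ∈ ℝ with exp(c·(p−1)·s) − ε > 0, set τ(s) = (c·(p−1))⁻¹·Real.log(exp(c·(p−1)·s) − ε) and define v(s,r) = exp(c·(s − τ(s)))·(a + u(τ(s), r)) − a. Then v satisfies the same equation, v_t = −κ·(p·v_r^(p−1)·v_rr + (m/r)·v_r^p) + k·(a + v)^p + c·(a + v), at every (s,r) with exp(c·(p−1)·s) − ε > 0 and r > 0. -/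

import Mathlib

noncomputable section

/-- Partial derivative in the first (time) variable. -/
def partial_t (u : ℝ → ℝ → ℝ) (t r : ℝ) : ℝ := deriv (fun s => u s r) t

/-- Partial derivative in the second (space) variable. -/
def partial_r (u : ℝ → ℝ → ℝ) (t r : ℝ) : ℝ := deriv (fun s => u t s) r

/-- Second partial derivative in the second (space) variable. -/
def partial_rr (u : ℝ → ℝ → ℝ) (t r : ℝ) : ℝ := deriv (deriv (fun s => u t s)) r

/-- Mixed partial derivative: first in space, then in time. -/
def partial_tr (u : ℝ → ℝ → ℝ) (t r : ℝ) : ℝ := deriv (fun s => deriv (fun y => u s y) r) t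

/-- `u` is C² on ℝ × (0,∞): `u`, `u_t`, `u_r`, `u_rr` and the mixed partial `u_tr`
exist and are continuous there. -/
def IsC2On (u : ℝ → ℝ → ℝ) : Prop :=
  (∀ t r : ℝ, 0 < r → DifferentiableAt ℝ (fun s => u s r) t) ∧
  (∀ t r : ℝ, 0 < r → DifferentiableAt ℝ (fun s => u t s) r) ∧
  (∀ t r : ℝ, 0 < r → DifferentiableAt ℝ (deriv (fun s => u t s)) r) ∧
  (∀ t r : ℝ, 0 < r → DifferentiableAt ℝ (fun s => deriv (fun y => u s y) r) t) ∧
  ContinuousOn (fun q : ℝ × ℝ => u q.1 q.2) {q : ℝ × ℝ | 0 < q.2} ∧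
  ContinuousOn (fun q : ℝ × ℝ => partial_t u q.1 q.2) {q : ℝ × ℝ | 0 < q.2} ∧
  ContinuousOn (fun q : ℝ × ℝ => partial_r u q.1 q.2) {q : ℝ × ℝ | 0 < q.2} ∧
  ContinuousOn (fun q : ℝ × ℝ => partial_rr u q.1 q.2) {q : ℝ × ℝ | 0 < q.2} ∧
  ContinuousOn (fun q : ℝ × ℝ => partial_tr u q.1 q.2) {q : ℝ × ℝ | 0 < q.2}

/-- The exponential dilation-and-shift point symmetry X₆ of the 1-dimensional nonlinear
diffusion-reaction equation with power-law diffusivity and source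
`f(u) = k·(a+u)^p + c·(a+u)`. -/
theorem symmetry_X6 (κ a k c m ε p : ℝ) (hc : c ≠ 0)
    (hp : p ≠ -1 ∧ p ≠ 0 ∧ p ≠ 1)
    (u : ℝ → ℝ → ℝ) (hu : IsC2On u)
    (hur : ∀ t r : ℝ, 0 < r → 0 < partial_r u t r)
    (hau : ∀ t r : ℝ, 0 < r → 0 < a + u t r)
    (hpde : ∀ t r : ℝ, 0 < r →
      partial_t u t r
        = -κ * (p * partial_r u t r ^ (p - 1) * partial_rr u t r
            + (m / r) * partial_r u t r ^ p)
          + k * (a + u t r) ^ p + c * (a + u t r))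
    (τ : ℝ → ℝ)
    (hτ : ∀ s : ℝ, 0 < Real.exp (c * (p - 1) * s) - ε →
      τ s = (c * (p - 1))⁻¹ * Real.log (Real.exp (c * (p - 1) * s) - ε))
    (v : ℝ → ℝ → ℝ)
    (hv : ∀ s r : ℝ, 0 < Real.exp (c * (p - 1) * s) - ε →
      v s r = Real.exp (c * (s - τ s)) * (a + u (τ s) r) - a) :
    ∀ s r : ℝ, 0 < Real.exp (c * (p - 1) * s) - ε → 0 < r →
      partial_t v s r
        = -κ * (p * partial_r v s r ^ (p - 1) * partial_rr v s r
            + (m / r) * partial_r v s r ^ p)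
          + k * (a + v s r) ^ p + c * (a + v s r) := by
  obtain ⟨hp1, hp0, hp2⟩ := hp
  obtain ⟨hu1, hu2, hu3, hu4, -⟩ := hu
  intro s r hE hr
  set b := c * (p - 1) with hb
  have hbne : b ≠ 0 := mul_ne_zero hc (sub_ne_zero.mpr hp2)
  set t0 := τ s with ht0
  have hτs : t0 = b⁻¹ * Real.log (Real.exp (b * s) - ε) := hτ s hE
  have hexpt0 : Real.exp (b * t0) = Real.exp (b * s) - ε := by
    rw [hτs, ← mul_assoc, mul_inv_cancel₀ hbne, one_mul, Real.exp_log hE]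
  set lam := Real.exp (c * (s - t0)) with hlam
  set mu := Real.exp (c * (s - t0) * (p - 1)) with hmu
  have hlampos : 0 < lam := Real.exp_pos _
  have hEnhds : ∀ᶠ s' in nhds s, 0 < Real.exp (b * s') - ε := by
    have hopen : IsOpen {x : ℝ | 0 < Real.exp (b * x) - ε} :=
      isOpen_lt continuous_const (by continuity)
    exact hopen.eventually_mem hE
  have hgd : HasDerivAt (fun s' => b⁻¹ * Real.log (Real.exp (b * s') - ε)) mu s := by
    have h1 : HasDerivAt (fun s' : ℝ => b * s') b s := by
      simpa using (hasDerivAt_id s).const_mul b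
    have h5 := (((h1.exp).sub_const ε).log (ne_of_gt hE)).const_mul b⁻¹
    convert h5 using 1
    case e'_4 => rfl
    case e'_5 => rfl
    have harg : c * (s - t0) * (p - 1) = b * s - b * t0 := by rw [hb]; ring
    rw [hmu, harg, Real.exp_sub, hexpt0]
    field_simp
  have hτd : HasDerivAt τ mu s :=
    hgd.congr_of_eventuallyEq (hEnhds.mono fun x hx => hτ x hx)
  have hut : HasDerivAt (fun t => u t r) (partial_t u t0 r) t0 := (hu1 t0 r hr).hasDerivAt
  have hcomp : HasDerivAt (fun s' => u (τ s') r) (partial_t u t0 r * mu) s := hut.comp s hτd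
  have hsub : HasDerivAt (fun s' => s' - τ s') (1 - mu) s := (hasDerivAt_id s).sub hτd
  have hcexp : HasDerivAt (fun s' => Real.exp (c * (s' - τ s'))) (lam * (c * (1 - mu))) s := by
    have := (hsub.const_mul c).exp
    simpa [hlam, ht0, mul_comm] using this
  have hF : HasDerivAt (fun s' => Real.exp (c * (s' - τ s')) * (a + u (τ s') r) - a)
      (lam * (c * (1 - mu)) * (a + u t0 r) + lam * (partial_t u t0 r * mu)) s := by
    have := (hcexp.mul (hcomp.const_add a)).sub_const a
    simpa [hlam, ht0] using this
  have hVt : partial_t v s r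
      = lam * (c * (1 - mu)) * (a + u t0 r) + lam * (partial_t u t0 r * mu) := by
    have hev : (fun s' => v s' r) =ᶠ[nhds s]
        (fun s' => Real.exp (c * (s' - τ s')) * (a + u (τ s') r) - a) :=
      hEnhds.mono fun x hx => hv x r hx
    exact (hF.congr_of_eventuallyEq hev).deriv
  have hw : (fun y => v s y) = fun y => lam * (a + u t0 y) - a := by
    funext y; rw [hv s y hE, ← ht0, ← hlam]
  have hvr : ∀ y : ℝ, 0 < y → partial_r v s y = lam * partial_r u t0 y := by
    intro y hy
    have h := (((hu2 t0 y hy).hasDerivAt.const_add a).const_mul lam).sub_const a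
    rw [partial_r, hw]
    exact h.deriv
  have hvrr : partial_rr v s r = lam * partial_rr u t0 r := by
    rw [partial_rr]
    have hev : deriv (fun y => v s y) =ᶠ[nhds r]
        fun y => lam * deriv (fun z => u t0 z) y := by
      filter_upwards [Ioi_mem_nhds hr] with y hy
      exact hvr y hy
    rw [hev.deriv_eq]
    exact ((hu3 t0 r hr).hasDerivAt.const_mul lam).deriv
  have hA : 0 < a + u t0 r := hau t0 r hr
  have hU1 : 0 < partial_r u t0 r := hur t0 r hr
  have hutv := hpde t0 r hr
  have hav : a + v s r = lam * (a + u t0 r) := by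
    rw [hv s r hE, ← ht0, ← hlam]; ring
  have e0 : lam ^ (p - 1) = mu := by
    rw [hlam, hmu, Real.rpow_def_of_pos (Real.exp_pos _), Real.log_exp]
  have e0p : lam ^ p = lam * mu := by
    rw [hlam, hmu, Real.rpow_def_of_pos (Real.exp_pos _), Real.log_exp, ← Real.exp_add]
    congr 1; ring
  have e1 : (lam * partial_r u t0 r) ^ (p - 1) = mu * partial_r u t0 r ^ (p - 1) := by
    rw [Real.mul_rpow hlampos.le hU1.le, e0]
  have e2 : (lam * partial_r u t0 r) ^ p = lam * mu * partial_r u t0 r ^ p := by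
    rw [Real.mul_rpow hlampos.le hU1.le, e0p]
  have e3 : (lam * (a + u t0 r)) ^ p = lam * mu * (a + u t0 r) ^ p := by
    rw [Real.mul_rpow hlampos.le hA.le, e0p]
  rw [hVt, hvr r hr, hvrr, hav, hutv, e1, e2, e3]
  ring
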